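/- Let m be even with m ≡ 2 (mod 4), and let A, B ⊆ Z_m with A ∪ B = Z_m and A ∩ B = {r_1, r_2, r_3, r_4} of size 4. If R_A(n) = R_B(n) for all n ∈ Z_m, then (after reordering) r_3 = r_1 + m/2 and r_4 = r_2 + m/2. -/

import Mathlib

open Finset

def repFn {m : ℕ} (A : Finset (ZMod m)) (n : ZMod m) : ℕ :=
  ((A ×ˢ A).filter (fun p => p.1 + p.2 = n)).card

lemma repFn_eq_card_filter {m : ℕ} [NeZero m] (A : Finset (ZMod m)) (n : ZMod m) :
    repFn A n = (Finset.univ.filter (fun a : ZMod m => a ∈ A ∧ n - a ∈ A)).card := by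
  unfold repFn
  apply Finset.card_nbij' (fun p => p.1) (fun a => (a, n - a))
  · rintro ⟨a, b⟩ hp
    simp only [Finset.mem_coe, Finset.mem_filter, Finset.mem_product] at hp ⊢
    obtain ⟨⟨ha, hb⟩, hs⟩ := hp
    refine ⟨Finset.mem_univ _, ha, ?_⟩
    have : n - a = b := by rw [← hs]; ring
    rwa [this]
  · intro a ha
    simp only [Finset.mem_coe, Finset.mem_filter, Finset.mem_univ, true_and] at ha
    simp only [Finset.mem_coe, Finset.mem_filter, Finset.mem_product]
    exact ⟨⟨ha.1, ha.2⟩, by ring⟩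
  · rintro ⟨a, b⟩ hp
    simp only [Finset.mem_coe, Finset.mem_filter, Finset.mem_product] at hp
    have : n - a = b := by rw [← hp.2]; ring
    simp [this]
  · intro a _; rfl

lemma repFn_cast_eq_sum {m : ℕ} [NeZero m] (C : Finset (ZMod m)) (n : ZMod m) :
    (repFn C n : ZMod 2) =
      ∑ a : ZMod m, (if a ∈ C then (1 : ZMod 2) else 0) * (if n - a ∈ C then 1 else 0) := by
  rw [repFn_eq_card_filter, Finset.card_filter]
  push_cast
  refine Finset.sum_congr rfl fun a _ => ?_
  by_cases h1 : a ∈ C <;> by_cases h2 : n - a ∈ C <;> simp [h1, h2]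

lemma sum_ind {m : ℕ} [NeZero m] (C : Finset (ZMod m)) :
    ∑ a : ZMod m, (if a ∈ C then (1 : ZMod 2) else 0) = (C.card : ZMod 2) := by
  rw [Finset.sum_ite_mem, Finset.univ_inter, Finset.card_eq_sum_ones]
  push_cast
  rfl

lemma sum_reindex {m : ℕ} [NeZero m] (n : ZMod m) (f : ZMod m → ZMod 2) :
    ∑ a : ZMod m, f (n - a) = ∑ a : ZMod m, f a := by
  exact Fintype.sum_equiv (Equiv.subLeft n) _ _ (fun a => rfl)

lemma even_repFn_inter {m : ℕ} [NeZero m] (hm : m % 4 = 2)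
    (A B : Finset (ZMod m)) (hcard : (A ∩ B).card = 4)
    (hU : A ∪ B = Finset.univ)
    (hR : ∀ n : ZMod m, repFn A n = repFn B n) (n : ZMod m) :
    (repFn (A ∩ B) n : ZMod 2) = 0 := by
  classical
  set g : Finset (ZMod m) → ZMod m → ZMod 2 := fun C a => if a ∈ C then 1 else 0 with hg
  have hpoint : ∀ a, g A a + g B a = 1 + g (A ∩ B) a := by
    intro a
    have hab : a ∈ A ∨ a ∈ B := by
      have : a ∈ A ∪ B := by rw [hU]; exact Finset.mem_univ a
      simpa using this
    by_cases h1 : a ∈ A <;> by_cases h2 : a ∈ B <;>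
      simp [hg, h1, h2, Finset.mem_inter] <;> tauto
  have hcross : ∑ a : ZMod m, g A a * g B (n - a) = ∑ a : ZMod m, g B a * g A (n - a) := by
    rw [← sum_reindex n (fun a => g B a * g A (n - a))]
    refine Finset.sum_congr rfl fun a _ => ?_
    rw [sub_sub_cancel, mul_comm]
  have expand1 : ∑ a : ZMod m, (g A a + g B a) * (g A (n - a) + g B (n - a))
      = (repFn A n : ZMod 2) + (repFn B n : ZMod 2) := by
    rw [repFn_cast_eq_sum, repFn_cast_eq_sum]
    have : ∀ a : ZMod m, (g A a + g B a) * (g A (n - a) + g B (n - a))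
        = g A a * g A (n - a) + g B a * g B (n - a)
          + (g A a * g B (n - a) + g B a * g A (n - a)) := by intro a; ring
    rw [Finset.sum_congr rfl (fun a _ => this a)]
    rw [Finset.sum_add_distrib, Finset.sum_add_distrib, Finset.sum_add_distrib, hcross]
    have h2 : ∑ a : ZMod m, g B a * g A (n - a) + ∑ a : ZMod m, g B a * g A (n - a) = 0 := by
      rw [← two_mul]
      simp [ZMod.natCast_self 2, show ((2 : ZMod 2)) = 0 from rfl]
    rw [h2, add_zero]
  have expand2 : ∑ a : ZMod m, (g A a + g B a) * (g A (n - a) + g B (n - a))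
      = (repFn (A ∩ B) n : ZMod 2) := by
    have : ∀ a : ZMod m, (g A a + g B a) * (g A (n - a) + g B (n - a))
        = (1 + g (A ∩ B) a) * (1 + g (A ∩ B) (n - a)) := by
      intro a; rw [hpoint a, hpoint (n - a)]
    rw [Finset.sum_congr rfl (fun a _ => this a)]
    have expand : ∀ a : ZMod m, (1 + g (A ∩ B) a) * (1 + g (A ∩ B) (n - a))
        = 1 + g (A ∩ B) a + g (A ∩ B) (n - a) + g (A ∩ B) a * g (A ∩ B) (n - a) := by
      intro a; ring
    rw [Finset.sum_congr rfl (fun a _ => expand a)]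
    rw [Finset.sum_add_distrib, Finset.sum_add_distrib, Finset.sum_add_distrib]
    rw [sum_reindex n (fun a => g (A ∩ B) a)]
    rw [sum_ind, repFn_cast_eq_sum]
    have hmz : ∑ _a : ZMod m, (1 : ZMod 2) = 0 := by
      rw [Finset.sum_const, Finset.card_univ, ZMod.card m]
      have : (m : ZMod 2) = 0 := by
        rw [ZMod.natCast_eq_zero_iff]; omega
      simp [this]
    have h4 : ((A ∩ B).card : ZMod 2) = 0 := by rw [hcard]; decide
    rw [hmz, h4]
    simp only [zero_add, add_zero]
    rfl
  rw [← expand2, expand1, hR n, ← two_mul]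
  simp [show ((2 : ZMod 2)) = 0 from rfl]

lemma repFn_parity_diag {m : ℕ} [NeZero m] (I : Finset (ZMod m)) (n : ZMod m) :
    (repFn I n : ZMod 2) = (((I.filter fun a => a + a = n)).card : ZMod 2) := by
  classical
  unfold repFn
  set S := (I ×ˢ I).filter (fun p : ZMod m × ZMod m => p.1 + p.2 = n) with hS
  have hsplit : S.card = (S.filter fun p => p.1 = p.2).card + (S.filter fun p => ¬ p.1 = p.2).card :=
    (Finset.card_filter_add_card_filter_not _).symm
  have hdiag : (S.filter fun p => p.1 = p.2).card = ((I.filter fun a => a + a = n)).card := by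
    apply Finset.card_nbij' (fun p => p.1) (fun a => (a, a))
    · rintro ⟨a, b⟩ hp
      simp only [hS, Finset.mem_coe, Finset.mem_filter, Finset.mem_product] at hp ⊢
      obtain ⟨⟨⟨ha, hb⟩, hs⟩, he⟩ := hp
      exact ⟨ha, by rw [he] at hs ⊢; exact hs⟩
    · intro a ha
      simp only [Finset.mem_coe, Finset.mem_filter] at ha
      simp only [hS, Finset.mem_coe, Finset.mem_filter, Finset.mem_product]
      exact ⟨⟨⟨ha.1, ha.1⟩, ha.2⟩, trivial⟩
    · rintro ⟨a, b⟩ hp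
      simp only [hS, Finset.mem_coe, Finset.mem_filter, Finset.mem_product] at hp
      simp [hp.2]
    · intro a _; rfl
  have hoff : (((S.filter fun p => ¬ p.1 = p.2).card : ℕ) : ZMod 2) = 0 := by
    rw [Finset.card_eq_sum_ones]
    push_cast
    apply Finset.sum_involution (fun p _ => (p.2, p.1))
    · intro a ha; decide
    · rintro ⟨a, b⟩ hp h
      simp only [hS, Finset.mem_filter, Finset.mem_product] at hp
      intro he
      have : b = a := congrArg Prod.fst he
      exact hp.2 (by rw [this])
    · rintro ⟨a, b⟩ hp
      simp only [hS, Finset.mem_filter, Finset.mem_product] at hp ⊢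
      obtain ⟨⟨⟨ha, hb⟩, hs⟩, hne⟩ := hp
      exact ⟨⟨⟨hb, ha⟩, by rw [← hs]; ring⟩, fun h => hne (by rw [h])⟩
    · rintro ⟨a, b⟩ hp; rfl
  rw [hsplit]
  push_cast
  rw [hoff, hdiag, add_zero]

lemma add_self_eq_zero_cases {m : ℕ} [NeZero m] (hm : m % 4 = 2) {x : ZMod m}
    (hx : x + x = 0) : x = 0 ∨ x = ((m / 2 : ℕ) : ZMod m) := by
  have hv : ((2 * x.val : ℕ) : ZMod m) = 0 := by
    push_cast [ZMod.natCast_zmod_val]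
    rw [two_mul]; exact hx
  rw [ZMod.natCast_eq_zero_iff] at hv
  have hlt : x.val < m := ZMod.val_lt x
  have : x.val = 0 ∨ x.val = m / 2 := by
    rcases Nat.eq_zero_or_pos (2 * x.val) with h0 | hpos
    · omega
    · have hle := Nat.le_of_dvd hpos hv
      obtain ⟨k, hk⟩ := hv
      match k with
      | 0 => omega
      | 1 => omega
      | (k + 2) =>
        have h2 : m * (k + 2) ≥ m * 2 := Nat.mul_le_mul_left m (by omega)
        omega
  rcases this with h | h
  · left
    rw [← ZMod.natCast_zmod_val x, h, Nat.cast_zero]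
  · right
    rw [← ZMod.natCast_zmod_val x, h]

theorem stmt15 (m : ℕ) [NeZero m] (hm : m % 4 = 2)
    (A B : Finset (ZMod m)) (r₁ r₂ r₃ r₄ : ZMod m)
    (hI : A ∩ B = {r₁, r₂, r₃, r₄}) (hcard : (A ∩ B).card = 4)
    (hU : A ∪ B = Finset.univ)
    (hR : ∀ n : ZMod m, repFn A n = repFn B n) :
    ∃ s₁ s₂ s₃ s₄ : ZMod m, ({s₁, s₂, s₃, s₄} : Finset (ZMod m)) = A ∩ B ∧
      s₃ = s₁ + ((m / 2 : ℕ) : ZMod m) ∧ s₄ = s₂ + ((m / 2 : ℕ) : ZMod m) := by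
  classical
  set c : ZMod m := ((m / 2 : ℕ) : ZMod m) with hc
  have hcc : c + c = 0 := by
    rw [hc, ← Nat.cast_add]
    have : m / 2 + m / 2 = m := by omega
    rw [this, ZMod.natCast_self]
  -- distinctness
  have h4 : ({r₁, r₂, r₃, r₄} : Finset (ZMod m)).card = 4 := by rw [← hI]; exact hcard
  have hd1 : r₁ ∉ ({r₂, r₃, r₄} : Finset (ZMod m)) := by
    intro h
    rw [show ({r₁, r₂, r₃, r₄} : Finset (ZMod m)) = insert r₁ {r₂, r₃, r₄} from rfl,
      Finset.insert_eq_self.mpr h] at h4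
    have := Finset.card_insert_le r₂ ({r₃, r₄} : Finset (ZMod m))
    have := Finset.card_insert_le r₃ ({r₄} : Finset (ZMod m))
    simp [Finset.card_singleton] at *
    omega
  have h4' : ({r₂, r₃, r₄} : Finset (ZMod m)).card = 3 := by
    rw [show ({r₁, r₂, r₃, r₄} : Finset (ZMod m)) = insert r₁ {r₂, r₃, r₄} from rfl,
      Finset.card_insert_of_notMem hd1] at h4
    omega
  have hd2 : r₂ ∉ ({r₃, r₄} : Finset (ZMod m)) := by
    intro h
    rw [show ({r₂, r₃, r₄} : Finset (ZMod m)) = insert r₂ {r₃, r₄} from rfl,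
      Finset.insert_eq_self.mpr h] at h4'
    have := Finset.card_insert_le r₃ ({r₄} : Finset (ZMod m))
    simp [Finset.card_singleton] at *
    omega
  have hd3 : r₃ ≠ r₄ := by
    intro h
    rw [show ({r₂, r₃, r₄} : Finset (ZMod m)) = insert r₂ {r₃, r₄} from rfl,
      Finset.card_insert_of_notMem hd2] at h4'
    simp [h] at h4'
  simp only [Finset.mem_insert, Finset.mem_singleton, not_or] at hd1 hd2
  obtain ⟨h12, h13, h14⟩ := hd1
  obtain ⟨h23, h24⟩ := hd2
  have h34 := hd3
  -- partner property
  have hdiagzero : ∀ n : ZMod m,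
      (((({r₁, r₂, r₃, r₄} : Finset (ZMod m)).filter fun a => a + a = n)).card : ZMod 2) = 0 := by
    intro n
    rw [← repFn_parity_diag, ← hI]
    exact even_repFn_inter hm A B hcard hU hR n
  have partner : ∀ r ∈ ({r₁, r₂, r₃, r₄} : Finset (ZMod m)),
      ∃ r' ∈ ({r₁, r₂, r₃, r₄} : Finset (ZMod m)), r' ≠ r ∧ r' = r + c := by
    intro r hr
    set s := ({r₁, r₂, r₃, r₄} : Finset (ZMod m)).filter (fun a => a + a = r + r) with hs
    have hmem : r ∈ s := Finset.mem_filter.mpr ⟨hr, rfl⟩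
    have hdvd : 2 ∣ s.card := by
      have := hdiagzero (r + r)
      rwa [ZMod.natCast_eq_zero_iff] at this
    have hone : 1 ≤ s.card := Finset.card_pos.mpr ⟨r, hmem⟩
    have htwo : 1 < s.card := by omega
    obtain ⟨a, ha, b, hb, hab⟩ := Finset.one_lt_card.mp htwo
    have key : ∀ x ∈ s, x ≠ r → ∃ r' ∈ ({r₁, r₂, r₃, r₄} : Finset (ZMod m)), r' ≠ r ∧ r' = r + c := by
      intro x hx hxr
      rw [hs, Finset.mem_filter] at hx
      have hxx : (x - r) + (x - r) = 0 := by
        have := hx.2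
        have : x + x - (r + r) = 0 := by rw [this]; ring
        calc (x - r) + (x - r) = x + x - (r + r) := by ring
        _ = 0 := this
      rcases add_self_eq_zero_cases hm hxx with h0 | hhalf
      · exact absurd (by linear_combination h0 : x = r) hxr
      · exact ⟨x, hx.1, hxr, by linear_combination hhalf⟩
    by_cases har : a = r
    · exact key b hb (fun h => hab (by rw [har, h]))
    · exact key a ha har
  -- extract partners
  have mem1 : r₁ ∈ ({r₁, r₂, r₃, r₄} : Finset (ZMod m)) := by simp
  have mem2 : r₂ ∈ ({r₁, r₂, r₃, r₄} : Finset (ZMod m)) := by simp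
  have mem3 : r₃ ∈ ({r₁, r₂, r₃, r₄} : Finset (ZMod m)) := by simp
  obtain ⟨p, hpmem, hpne, hpeq⟩ := partner r₁ mem1
  simp only [Finset.mem_insert, Finset.mem_singleton] at hpmem
  have hsetEq : ∀ a b d e : ZMod m, ({a, b, d, e} : Finset (ZMod m)) = {a, d, b, e} :=
    fun a b d e => congrArg (insert a) (Finset.insert_comm b d {e})
  rcases hpmem with h | h | h | h
  · exact absurd h hpne
  · -- r₂ = r₁ + c ; find partner of r₃
    have hp : r₂ = r₁ + c := h ▸ hpeq
    obtain ⟨q, hqmem, hqne, hqeq⟩ := partner r₃ mem3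
    simp only [Finset.mem_insert, Finset.mem_singleton] at hqmem
    rcases hqmem with hq | hq | hq | hq
    · exact absurd (by linear_combination (hq ▸ hqeq : r₁ = r₃ + c) + hp + hcc : r₂ = r₃) h23
    · exact absurd (by linear_combination (hq ▸ hqeq : r₂ = r₃ + c) - hp : r₁ = r₃) h13
    · exact absurd hq hqne
    · refine ⟨r₁, r₃, r₂, r₄, ?_, hp, hq ▸ hqeq⟩
      rw [hI]; exact hsetEq r₁ r₃ r₂ r₄
  · -- r₃ = r₁ + c ; find partner of r₂
    have hp : r₃ = r₁ + c := h ▸ hpeq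
    obtain ⟨q, hqmem, hqne, hqeq⟩ := partner r₂ mem2
    simp only [Finset.mem_insert, Finset.mem_singleton] at hqmem
    rcases hqmem with hq | hq | hq | hq
    · exact absurd (by linear_combination -(hq ▸ hqeq : r₁ = r₂ + c) - hp - hcc : r₂ = r₃) h23
    · exact absurd hq hqne
    · exact absurd (by linear_combination (hq ▸ hqeq : r₃ = r₂ + c) - hp : r₁ = r₂) h12
    · exact ⟨r₁, r₂, r₃, r₄, hI.symm, hp, hq ▸ hqeq⟩
  · -- r₄ = r₁ + c ; find partner of r₂
    have hp : r₄ = r₁ + c := h ▸ hpeq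
    obtain ⟨q, hqmem, hqne, hqeq⟩ := partner r₂ mem2
    simp only [Finset.mem_insert, Finset.mem_singleton] at hqmem
    rcases hqmem with hq | hq | hq | hq
    · exact absurd (by linear_combination -(hq ▸ hqeq : r₁ = r₂ + c) - hp - hcc : r₂ = r₄) h24
    · exact absurd hq hqne
    · refine ⟨r₁, r₂, r₄, r₃, ?_, hp, hq ▸ hqeq⟩
      rw [hI]
      exact congrArg (insert r₁) (congrArg (insert r₂) (Finset.pair_comm r₄ r₃))
    · exact absurd (by linear_combination (hq ▸ hqeq : r₄ = r₂ + c) - hp : r₁ = r₂) h12
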